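/- arXiv:1901.02109 — 4 statements merged into one kernel-verified Lean document; each statement's English description precedes it below -/
import Mathlib

section
/- There exists a ring homomorphism γ : R → R such that γ fixes every constant power series, γ(X) = μ₁, and γ(φ(f)) = φ(f) for every f ∈ W⟦Y⟧; moreover, any such γ satisfies γ ∘ γ = id_R, so γ is a ring automorphism of R of order dividing 2. -/
/- Setup: `k` a perfect field of characteristic 2, `𝕎 = W(k)` the 2-typical Witt
vectors, `R = 𝕎⟦X⟧` the formal power series ring, `μ₁ = (2 - X)(1 - X)⁻¹` and
`μ = X + μ₁` (modelling `π₀E` with `μ₀ = X`). -/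

noncomputable section

open scoped PowerSeries

instance : Fact (Nat.Prime 2) := ⟨Nat.prime_two⟩

variable (k : Type) [Field k] [CharP k 2] [PerfectField k]

local notation "𝕎" => WittVector 2 k

/-- `μ₁ = γ(μ₀) = (2 - X)·(1 - X)⁻¹`. -/
def μ₁ : 𝕎⟦X⟧ := (2 - PowerSeries.X) * Ring.inverse (1 - PowerSeries.X)

/-- `μ = μ₀ + μ₁`. -/
def μ : 𝕎⟦X⟧ := PowerSeries.X + μ₁ k

set_option linter.unusedSectionVars false

namespace Stmt1Aux
open WittVector Function PowerSeries
variable {k}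




lemma iterate_vf (z : 𝕎) (n : ℕ) :
    verschiebung^[n] ((WittVector.frobenius)^[n] z) = 2 ^ n * z := by
  induction n generalizing z with
  | zero => simp
  | succ n ih =>
    rw [Function.iterate_succ_apply' (f := verschiebung),
      Function.iterate_succ_apply (f := (WittVector.frobenius : 𝕎 → 𝕎)),
      ih (WittVector.frobenius z)]
    have h2 : (2 : 𝕎) ^ n * WittVector.frobenius z = WittVector.frobenius (2 ^ n * z) := by
      rw [map_mul, map_pow, map_ofNat]
    rw [h2, WittVector.verschiebung_frobenius]
    push_cast
    ring

lemma coeff_iterate_verschiebung_eq_zero (w : 𝕎) {n i : ℕ} (hi : i < n) :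
    (verschiebung^[n] w).coeff i = 0 := by
  induction n generalizing i with
  | zero => omega
  | succ n ih =>
    rw [Function.iterate_succ_apply' (f := verschiebung)]
    cases i with
    | zero => exact verschiebung_coeff_zero _
    | succ i => rw [verschiebung_coeff_succ]; exact ih (by omega)

lemma coeff_eq_zero_of_dvd {x : 𝕎} {n : ℕ} (h : (2 : 𝕎) ^ n ∣ x) :
    ∀ i < n, x.coeff i = 0 := by
  obtain ⟨y, rfl⟩ := h
  intro i hi
  rw [← iterate_vf]
  exact coeff_iterate_verschiebung_eq_zero _ hi

lemma dvd_of_coeff_eq_zero {x : 𝕎} {n : ℕ} (h : ∀ i < n, x.coeff i = 0) :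
    (2 : 𝕎) ^ n ∣ x := by
  obtain ⟨z, hz⟩ := ((frobenius_bijective 2 k).surjective.iterate n) (x.shift n)
  refine ⟨z, ?_⟩
  rw [WittVector.eq_iterate_verschiebung h, ← hz, iterate_vf]

lemma dvd_sub_iff {a b : 𝕎} {m : ℕ} :
    (2 : 𝕎) ^ m ∣ a - b ↔ ∀ i < m, a.coeff i = b.coeff i := by
  have key : (∀ i < m, (a - b).coeff i = 0) ↔ ∀ i < m, a.coeff i = b.coeff i := by
    have h1 : (∀ i < m, (a - b).coeff i = 0) ↔ truncate m (a - b) = 0 := by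
      rw [← RingHom.mem_ker, WittVector.mem_ker_truncate]
    have h2 : (∀ i < m, a.coeff i = b.coeff i) ↔ truncate m a = truncate m b := by
      constructor
      · intro h
        ext i
        rw [coeff_truncate, coeff_truncate]
        exact h i i.2
      · intro h i hi
        have := congrArg (fun t => TruncatedWittVector.coeff ⟨i, hi⟩ t) h
        simpa [coeff_truncate] using this
    rw [h1, h2, map_sub, sub_eq_zero]
  constructor
  · intro h
    exact key.1 (coeff_eq_zero_of_dvd h)
  · intro h
    exact dvd_of_coeff_eq_zero (key.2 h)

lemma eq_zero_of_forall_dvd {x : 𝕎} (h : ∀ n, (2 : 𝕎) ^ n ∣ x) : x = 0 := by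
  ext i
  rw [zero_coeff]
  exact coeff_eq_zero_of_dvd (h (i + 1)) i (by omega)




lemma two_eq_C : (2 : 𝕎⟦X⟧) = PowerSeries.C 2 := (map_ofNat C 2).symm

variable (k) in
def II : Ideal (𝕎⟦X⟧) := Ideal.span {2, PowerSeries.X}

lemma two_mem_II : (2 : 𝕎⟦X⟧) ∈ II k := Ideal.subset_span (by simp)
lemma X_mem_II : (PowerSeries.X : 𝕎⟦X⟧) ∈ II k := Ideal.subset_span (by simp)

lemma dvd_coeff_of_mem_pow {n : ℕ} {f : 𝕎⟦X⟧} (hf : f ∈ II k ^ n) :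
    ∀ j < n, (2 : 𝕎) ^ (n - j) ∣ PowerSeries.coeff j f := by
  induction n generalizing f with
  | zero => omega
  | succ n ih =>
    rw [pow_succ] at hf
    refine Submodule.mul_induction_on hf ?_ ?_
    · intro a ha b hb
      rw [II, Ideal.mem_span_pair] at hb
      obtain ⟨u, v, rfl⟩ := hb
      intro j hj
      have hab : a * (u * 2 + v * X) = PowerSeries.C 2 * (a * u) + X * (a * v) := by
        rw [← two_eq_C]; ring
      rw [hab, map_add]
      apply dvd_add
      · rw [coeff_C_mul, PowerSeries.coeff_mul]
        rw [Finset.mul_sum]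
        apply Finset.dvd_sum
        rintro ⟨x, y⟩ hxy
        rw [Finset.HasAntidiagonal.mem_antidiagonal] at hxy
        simp only
        by_cases hx : x < n
        · obtain ⟨t, ht⟩ := ih ha x hx
          refine dvd_trans (pow_dvd_pow 2 (show n + 1 - j ≤ n - x + 1 by omega)) ⟨t * PowerSeries.coeff y u, ?_⟩
          rw [ht, pow_succ]; ring
        · rw [show n + 1 - j = 1 by omega, pow_one]
          exact dvd_mul_right 2 _
      · cases j with
        | zero => rw [coeff_zero_X_mul]; exact dvd_zero _
        | succ j =>
          rw [coeff_succ_X_mul, PowerSeries.coeff_mul]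
          apply Finset.dvd_sum
          rintro ⟨x, y⟩ hxy
          rw [Finset.HasAntidiagonal.mem_antidiagonal] at hxy
          exact (pow_dvd_pow 2 (show n + 1 - (j + 1) ≤ n - x by omega)).trans
            ((ih ha x (by omega)).mul_right _)
    · intro r s ihr ihs j hj
      rw [map_add]
      exact dvd_add (ihr j hj) (ihs j hj)

lemma mem_pow_of_dvd_coeff {n : ℕ} {f : 𝕎⟦X⟧}
    (h : ∀ j < n, (2 : 𝕎) ^ (n - j) ∣ PowerSeries.coeff j f) : f ∈ II k ^ n := by
  induction n generalizing f with
  | zero => simp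
  | succ n ih =>
    rw [eq_X_mul_shift_add_const f]
    apply add_mem
    · rw [pow_succ']
      refine Ideal.mul_mem_mul X_mem_II (ih fun j hj => ?_)
      rw [PowerSeries.coeff_mk]
      have := h (j + 1) (by omega)
      rwa [show n + 1 - (j + 1) = n - j by omega] at this
    · obtain ⟨c, hc⟩ := h 0 (by omega)
      rw [← coeff_zero_eq_constantCoeff_apply, hc, show n + 1 - 0 = n + 1 by omega,
        map_mul, map_pow, ← two_eq_C]
      exact Ideal.mul_mem_right _ _ (Ideal.pow_mem_pow two_mem_II _)

lemma eq_zero_of_mem_all {f : 𝕎⟦X⟧} (h : ∀ n, f ∈ II k ^ n) : f = 0 := by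
  refine PowerSeries.ext fun j => ?_
  rw [map_zero]
  apply eq_zero_of_forall_dvd
  intro m
  have := dvd_coeff_of_mem_pow (h (m + j + 1)) j (by omega)
  exact (pow_dvd_pow 2 (by omega)).trans this


lemma mu1_def : μ₁ k = (2 - PowerSeries.X) * Ring.inverse (1 - PowerSeries.X) := rfl
lemma mu_def : μ k = PowerSeries.X + μ₁ k := rfl


/-! ### Limits -/

lemma exists_limit (c : ℕ → 𝕎⟦X⟧) (hc : ∀ {m n : ℕ}, m ≤ n → c n - c m ∈ II k ^ m) :
    ∃ L : 𝕎⟦X⟧, ∀ n, L - c n ∈ II k ^ n := by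
  refine ⟨PowerSeries.mk fun j => WittVector.mk 2 fun i =>
    (PowerSeries.coeff j (c (i + j + 1))).coeff i, fun n => ?_⟩
  apply mem_pow_of_dvd_coeff
  intro j hj
  rw [map_sub, dvd_sub_iff]
  intro i hi
  rw [PowerSeries.coeff_mk, WittVector.coeff_mk]
  have h1 : c n - c (i + j + 1) ∈ II k ^ (i + j + 1) := hc (by omega)
  have h2 := dvd_coeff_of_mem_pow h1 j (by omega)
  rw [map_sub, show i + j + 1 - j = i + 1 by omega, dvd_sub_iff] at h2
  exact (h2 i (by omega)).symm

/-! ### `μ₁` facts -/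

lemma unit_one_sub_X : IsUnit (1 - PowerSeries.X : 𝕎⟦X⟧) := by
  rw [PowerSeries.isUnit_iff_constantCoeff, map_sub, map_one, constantCoeff_X, sub_zero]
  exact isUnit_one

lemma one_sub_X_mul_inv : (1 - PowerSeries.X : 𝕎⟦X⟧) * Ring.inverse (1 - PowerSeries.X) = 1 :=
  Ring.mul_inverse_cancel _ unit_one_sub_X

lemma mu1_eq : μ₁ k = 2 + PowerSeries.X * Ring.inverse (1 - PowerSeries.X) := by
  have h := one_sub_X_mul_inv (k := k)
  calc μ₁ k = 2 * ((1 - PowerSeries.X) * Ring.inverse (1 - PowerSeries.X))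
      + PowerSeries.X * Ring.inverse (1 - PowerSeries.X) := by rw [mu1_def]; ring
    _ = _ := by rw [h, mul_one]

lemma mu1_mem : μ₁ k ∈ II k := by
  rw [mu1_eq]
  exact add_mem two_mem_II (Ideal.mul_mem_right _ _ X_mem_II)

lemma mu_sub_two_eq : μ k - 2 =
    PowerSeries.X + PowerSeries.X * Ring.inverse (1 - PowerSeries.X : 𝕎⟦X⟧) := by
  rw [mu_def, mu1_eq]; ring

lemma mu_sub_two_mem : μ k - 2 ∈ II k := by
  rw [mu_sub_two_eq]
  exact add_mem X_mem_II (Ideal.mul_mem_right _ _ X_mem_II)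

lemma two_sub_mu1 : (2 : 𝕎⟦X⟧) - μ₁ k = PowerSeries.X * (1 - μ₁ k) := by
  have hmul : μ₁ k * (1 - PowerSeries.X) = 2 - PowerSeries.X := by
    have h := one_sub_X_mul_inv (k := k)
    calc μ₁ k * (1 - PowerSeries.X)
        = (2 - PowerSeries.X) * ((1 - PowerSeries.X) * Ring.inverse (1 - PowerSeries.X)) := by
          rw [mu1_def]; ring
      _ = 2 - PowerSeries.X := by rw [h, mul_one]
  have hcancel : ((2 : 𝕎⟦X⟧) - μ₁ k) * (1 - PowerSeries.X)
      = (PowerSeries.X * (1 - μ₁ k)) * (1 - PowerSeries.X) := by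
    linear_combination (PowerSeries.X - 1 : 𝕎⟦X⟧) * hmul
  exact (unit_one_sub_X (k := k)).mul_right_cancel hcancel

lemma map_mu1 (γ : 𝕎⟦X⟧ →+* 𝕎⟦X⟧) (hC : ∀ a : 𝕎, γ (PowerSeries.C a) = PowerSeries.C a)
    (hX : γ PowerSeries.X = μ₁ k) : γ (μ₁ k) = PowerSeries.X := by
  have h1 : γ (1 - PowerSeries.X) = 1 - μ₁ k := by rw [map_sub, map_one, hX]
  have h2 : (1 - μ₁ k) * γ (Ring.inverse (1 - PowerSeries.X)) = 1 := by
    rw [← h1, ← map_mul, one_sub_X_mul_inv, map_one]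
  have h3 : γ (μ₁ k) = ((2 : 𝕎⟦X⟧) - μ₁ k) * γ (Ring.inverse (1 - PowerSeries.X)) := by
    conv_lhs => rw [mu1_def]
    rw [map_mul, map_sub, map_ofNat, hX]
  rw [h3, two_sub_mu1, mul_assoc, h2, mul_one]

lemma map_mu_sub_two (γ : 𝕎⟦X⟧ →+* 𝕎⟦X⟧)
    (hC : ∀ a : 𝕎, γ (PowerSeries.C a) = PowerSeries.C a)
    (hX : γ PowerSeries.X = μ₁ k) : γ (μ k - 2) = μ k - 2 := by
  rw [map_sub, map_ofNat, mu_def, map_add, hX, map_mu1 γ hC hX]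
  ring

/-! ### Uniqueness -/

lemma monomial_eq (n : ℕ) (a : 𝕎) :
    PowerSeries.monomial n a = PowerSeries.C a * PowerSeries.X ^ n := by
  refine PowerSeries.ext fun m => ?_
  rw [coeff_monomial, coeff_C_mul, coeff_X_pow, mul_ite, mul_one, mul_zero]

lemma hom_ext (γ₁ γ₂ : 𝕎⟦X⟧ →+* 𝕎⟦X⟧)
    (h₁C : ∀ a : 𝕎, γ₁ (PowerSeries.C a) = PowerSeries.C a)
    (h₂C : ∀ a : 𝕎, γ₂ (PowerSeries.C a) = PowerSeries.C a)
    (hX : γ₁ PowerSeries.X = γ₂ PowerSeries.X) (hmem : γ₂ PowerSeries.X ∈ II k) :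
    γ₁ = γ₂ := by
  have hpoly : ∀ P : Polynomial 𝕎, γ₁ (P : 𝕎⟦X⟧) = γ₂ (P : 𝕎⟦X⟧) := by
    intro P
    induction P using Polynomial.induction_on' with
    | add p q hp hq => rw [Polynomial.coe_add, map_add, map_add, hp, hq]
    | monomial n a =>
      rw [Polynomial.coe_monomial, monomial_eq, map_mul, map_mul, map_pow, map_pow,
        h₁C, h₂C, hX]
  refine RingHom.ext fun f => ?_
  rw [← sub_eq_zero]
  apply eq_zero_of_mem_all
  intro n
  have hdvd : (PowerSeries.X : 𝕎⟦X⟧) ^ n ∣ f - ((trunc n f : Polynomial 𝕎) : 𝕎⟦X⟧) := by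
    rw [PowerSeries.X_pow_dvd_iff]
    intro d hd
    rw [map_sub, Polynomial.coeff_coe, coeff_trunc, if_pos hd, sub_self]
  obtain ⟨g, hg⟩ := hdvd
  have hf : f = ((trunc n f : Polynomial 𝕎) : 𝕎⟦X⟧) + PowerSeries.X ^ n * g := by
    rw [← hg]; ring
  have key : γ₁ f - γ₂ f = γ₂ PowerSeries.X ^ n * (γ₁ g - γ₂ g) := by
    rw [hf, map_add, map_add, map_mul, map_mul, map_pow, map_pow, hpoly, hX]
    ring
  rw [key]
  exact Ideal.mul_mem_right _ _ (Ideal.pow_mem_pow hmem n)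

/-! ### Partial evaluations -/

variable (k) in
def sEval (f : 𝕎⟦X⟧) (n : ℕ) : 𝕎⟦X⟧ :=
  Polynomial.eval₂ (PowerSeries.C) (μ₁ k) (trunc n f)

lemma sEval_succ (f : 𝕎⟦X⟧) (n : ℕ) :
    sEval k f (n + 1) = sEval k f n + PowerSeries.C (coeff n f) * μ₁ k ^ n := by
  rw [sEval, sEval, trunc_succ, Polynomial.eval₂_add, Polynomial.eval₂_monomial]

lemma sEval_sub_mem {f : 𝕎⟦X⟧} {m n : ℕ} (h : m ≤ n) :
    sEval k f n - sEval k f m ∈ II k ^ m := by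
  induction n, h using Nat.le_induction with
  | base => rw [sub_self]; exact zero_mem _
  | succ n hmn ih =>
    rw [sEval_succ, add_sub_right_comm]
    refine add_mem ih (Ideal.pow_le_pow_right hmn ?_)
    exact Ideal.mul_mem_left _ _ (Ideal.pow_mem_pow mu1_mem n)

lemma sEval_add (f g : 𝕎⟦X⟧) (n : ℕ) :
    sEval k (f + g) n = sEval k f n + sEval k g n := by
  rw [sEval, sEval, sEval, map_add, Polynomial.eval₂_add]

lemma sEval_C (a : 𝕎) (n : ℕ) : sEval k (PowerSeries.C a) (n + 1) = PowerSeries.C a := by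
  rw [sEval, trunc_C, Polynomial.eval₂_C]

lemma sEval_X (n : ℕ) : sEval k PowerSeries.X (n + 2) = μ₁ k := by
  rw [sEval, trunc_X, Polynomial.eval₂_X]

lemma sEval_mul_mem (f g : 𝕎⟦X⟧) (n : ℕ) :
    sEval k (f * g) n - sEval k f n * sEval k g n ∈ II k ^ n := by
  have hD : (Polynomial.X : Polynomial 𝕎) ^ n ∣ trunc n (f * g) - trunc n f * trunc n g := by
    rw [Polynomial.X_pow_dvd_iff]
    intro d hd
    rw [Polynomial.coeff_sub, coeff_trunc, if_pos hd,
      coeff_mul_eq_coeff_trunc_mul_trunc f g hd, ← Polynomial.coe_mul, Polynomial.coeff_coe, sub_self]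
  obtain ⟨q, hq⟩ := hD
  have key : sEval k (f * g) n - sEval k f n * sEval k g n
      = μ₁ k ^ n * Polynomial.eval₂ (PowerSeries.C) (μ₁ k) q := by
    rw [sEval, sEval, sEval, ← Polynomial.eval₂_mul, ← Polynomial.eval₂_sub, hq,
      Polynomial.eval₂_mul, Polynomial.eval₂_pow, Polynomial.eval₂_X]
  rw [key]
  exact Ideal.mul_mem_right _ _ (Ideal.pow_mem_pow mu1_mem n)

/-! ### The endomorphism `γ` -/

variable (k) in
def gammaFun (f : 𝕎⟦X⟧) : 𝕎⟦X⟧ :=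
  Classical.choose (exists_limit (sEval k f) fun {_ _} h => sEval_sub_mem h)

lemma gammaFun_spec (f : 𝕎⟦X⟧) (n : ℕ) : gammaFun k f - sEval k f n ∈ II k ^ n :=
  Classical.choose_spec (exists_limit (sEval k f) fun {_ _} h => sEval_sub_mem h) n

lemma gammaFun_C (a : 𝕎) : gammaFun k (PowerSeries.C a) = PowerSeries.C a := by
  rw [← sub_eq_zero]
  apply eq_zero_of_mem_all
  intro n
  have h := gammaFun_spec (PowerSeries.C a) (n + 1)
  rw [sEval_C] at h
  exact Ideal.pow_le_pow_right (by omega) h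

lemma gammaFun_X : gammaFun k PowerSeries.X = μ₁ k := by
  rw [← sub_eq_zero]
  apply eq_zero_of_mem_all
  intro n
  have h := gammaFun_spec (PowerSeries.X : 𝕎⟦X⟧) (n + 2)
  rw [sEval_X] at h
  exact Ideal.pow_le_pow_right (by omega) h

lemma gammaFun_add (f g : 𝕎⟦X⟧) :
    gammaFun k (f + g) = gammaFun k f + gammaFun k g := by
  rw [← sub_eq_zero]
  apply eq_zero_of_mem_all
  intro n
  have key : gammaFun k (f + g) - (gammaFun k f + gammaFun k g)
      = (gammaFun k (f + g) - sEval k (f + g) n) - (gammaFun k f - sEval k f n)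
        - (gammaFun k g - sEval k g n) := by
    rw [sEval_add]; ring
  rw [key]
  exact sub_mem (sub_mem (gammaFun_spec _ n) (gammaFun_spec _ n)) (gammaFun_spec _ n)

lemma gammaFun_mul (f g : 𝕎⟦X⟧) :
    gammaFun k (f * g) = gammaFun k f * gammaFun k g := by
  rw [← sub_eq_zero]
  apply eq_zero_of_mem_all
  intro n
  have key : gammaFun k (f * g) - gammaFun k f * gammaFun k g
      = (gammaFun k (f * g) - sEval k (f * g) n)
        + (sEval k (f * g) n - sEval k f n * sEval k g n)
        + (sEval k f n * (sEval k g n - gammaFun k g))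
        + ((sEval k f n - gammaFun k f) * gammaFun k g) := by ring
  have h3 : sEval k g n - gammaFun k g ∈ II k ^ n := by
    have := neg_mem (gammaFun_spec g n); rwa [neg_sub] at this
  have h4 : sEval k f n - gammaFun k f ∈ II k ^ n := by
    have := neg_mem (gammaFun_spec f n); rwa [neg_sub] at this
  rw [key]
  exact add_mem (add_mem (add_mem (gammaFun_spec _ n) (sEval_mul_mem f g n))
    (Ideal.mul_mem_left _ _ h3)) (Ideal.mul_mem_right _ _ h4)

variable (k) in
def gammaHom : 𝕎⟦X⟧ →+* 𝕎⟦X⟧ where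
  toFun := gammaFun k
  map_one' := by show gammaFun k 1 = 1; rw [← map_one (PowerSeries.C), gammaFun_C, map_one]
  map_mul' := gammaFun_mul
  map_zero' := by show gammaFun k 0 = 0; rw [← map_zero (PowerSeries.C), gammaFun_C, map_zero]
  map_add' := gammaFun_add

lemma gammaHom_C (a : 𝕎) : gammaHom k (PowerSeries.C a) = PowerSeries.C a := gammaFun_C a
lemma gammaHom_X : gammaHom k PowerSeries.X = μ₁ k := gammaFun_X


end Stmt1Aux

open Stmt1Aux

/-- Given `φ : W⟦Y⟧ → R`, the `W`-algebra homomorphism determined by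
substituting `Y ↦ μ − 2` (characterized by fixing constants and sending the
variable to `μ - 2`), there exists a ring homomorphism `γ : R → R` fixing every
constant power series, with `γ(X) = μ₁`, and fixing `φ(f)` for every `f`;
moreover any such `γ` satisfies `γ ∘ γ = id`, so `γ` is a ring automorphism of
`R` of order dividing 2. -/
theorem statement1
    (φ : 𝕎⟦X⟧ →+* 𝕎⟦X⟧)
    (hφC : ∀ a : 𝕎, φ (PowerSeries.C a) = PowerSeries.C a)
    (hφY : φ PowerSeries.X = μ k - 2) :
    (∃ γ : 𝕎⟦X⟧ →+* 𝕎⟦X⟧,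
      (∀ a : 𝕎, γ (PowerSeries.C a) = PowerSeries.C a) ∧
      γ PowerSeries.X = μ₁ k ∧
      (∀ f : 𝕎⟦X⟧, γ (φ f) = φ f)) ∧
    (∀ γ : 𝕎⟦X⟧ →+* 𝕎⟦X⟧,
      (∀ a : 𝕎, γ (PowerSeries.C a) = PowerSeries.C a) →
      γ PowerSeries.X = μ₁ k →
      (∀ f : 𝕎⟦X⟧, γ (φ f) = φ f) →
      γ.comp γ = RingHom.id (𝕎⟦X⟧)) := by
  constructor
  · refine ⟨gammaHom k, gammaHom_C, gammaHom_X, fun f => ?_⟩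
    have heq : (gammaHom k).comp φ = φ := by
      apply hom_ext
      · intro a
        rw [RingHom.comp_apply, hφC, gammaHom_C]
      · exact hφC
      · rw [RingHom.comp_apply, hφY, map_mu_sub_two (gammaHom k) gammaHom_C gammaHom_X]
      · rw [hφY]; exact mu_sub_two_mem
    have := RingHom.congr_fun heq f
    rwa [RingHom.comp_apply] at this
  · intro γ hC hX _
    apply hom_ext
    · intro a
      rw [RingHom.comp_apply, hC, hC]
    · intro a
      rw [RingHom.id_apply]
    · rw [RingHom.comp_apply, hX, map_mu1 γ hC hX, RingHom.id_apply]
    · rw [RingHom.id_apply]; exact X_mem_II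
end
end

section
/- There is a unique ring homomorphism Γ : L → L that agrees with γ on R ⊆ L and satisfies Γ(T) = (1 − X)·T. This Γ satisfies Γ²(T) = −T and Γ⁴ = id_L; in particular Γ is a ring automorphism of L of order exactly 4, giving L = E_* the structure of a C₄-algebra. -/
/- Setup: `k` a perfect field of characteristic 2, `𝕎 = W(k)` the 2-typical Witt
vectors, `R = 𝕎⟦X⟧` the formal power series ring, `μ₁ = (2 - X)(1 - X)⁻¹` and
`μ = X + μ₁` (modelling `π₀E` with `μ₀ = X`). -/

noncomputable section

open scoped PowerSeries

variable (k : Type) [Field k] [CharP k 2] [PerfectField k]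

local notation "𝕎" => WittVector 2 k

/- `L = R[T, T⁻¹]` models `E_* = W⟦μ₀⟧[r₁,₀^{±1}]` with `r₁,₀ = T`. -/
local notation "L" => LaurentPolynomial (𝕎⟦X⟧)

/-- `r₁,₁ = (1 − X)·T`. -/
def r₁₁ : L := LaurentPolynomial.C (1 - PowerSeries.X) * LaurentPolynomial.T 1

/-- `δ₁ = T·r₁,₁`. -/
def δ₁ : L := LaurentPolynomial.T 1 * r₁₁ k

/-- `Σ₂,₀ = T²`. -/
def sig₂₀ : L := LaurentPolynomial.T 1 ^ 2

/-- `Σ₂,₁ = −r₁,₁²`. -/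
def sig₂₁ : L := -(r₁₁ k ^ 2)

/-- `T₂ = T² + r₁,₁²`. -/
def T₂ : L := LaurentPolynomial.T 1 ^ 2 + r₁₁ k ^ 2

/-- `Δ₁ = δ₁² = (1 − X)²·T⁴`. -/
def Δ₁ : L := δ₁ k ^ 2

set_option linter.unusedSectionVars false

/-- Rigidity: a ring endomorphism of `𝕎⟦X⟧` fixing constants and `X` is the identity. -/
theorem psfix (ψ : 𝕎⟦X⟧ →+* 𝕎⟦X⟧)
    (hC : ∀ a : 𝕎, ψ (PowerSeries.C a) = PowerSeries.C a)
    (hX : ψ PowerSeries.X = PowerSeries.X) (f : 𝕎⟦X⟧) : ψ f = f := by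
  have hpoly : ∀ p : Polynomial 𝕎, ψ (p : 𝕎⟦X⟧) = (p : 𝕎⟦X⟧) := by
    intro p
    induction p using Polynomial.induction_on' with
    | add p q hp hq => rw [Polynomial.coe_add, map_add, hp, hq]
    | monomial n a =>
        rw [← Polynomial.C_mul_X_pow_eq_monomial, Polynomial.coe_mul, Polynomial.coe_pow,
          Polynomial.coe_C, Polynomial.coe_X, map_mul, map_pow, hC, hX]
  have hdvd : ∀ n : ℕ, (PowerSeries.X : 𝕎⟦X⟧) ^ n ∣ (ψ f - f) := by
    intro n
    obtain ⟨g, hg⟩ : (PowerSeries.X : 𝕎⟦X⟧) ^ n ∣ (f - ((f.trunc n : Polynomial 𝕎) : 𝕎⟦X⟧)) := by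
      rw [PowerSeries.X_pow_dvd_iff]
      intro m hm
      simp [Polynomial.coeff_coe, PowerSeries.coeff_trunc, hm]
    have h2 := congrArg ψ hg
    rw [map_sub, map_mul, map_pow, hX, hpoly] at h2
    refine ⟨ψ g - g, ?_⟩
    have : ψ f - f = (ψ f - ((f.trunc n : Polynomial 𝕎) : 𝕎⟦X⟧))
        - (f - ((f.trunc n : Polynomial 𝕎) : 𝕎⟦X⟧)) := by ring
    rw [this, h2, hg]; ring
  have : ψ f - f = 0 := by
    refine PowerSeries.ext fun m => ?_
    have := (PowerSeries.X_pow_dvd_iff.mp (hdvd (m + 1))) m (by omega)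
    simpa using this
  exact sub_eq_zero.mp this

/-- Two ring endomorphisms of `L` agreeing on `C` and on `T 1` are equal. -/
theorem lext (F G : L →+* L)
    (hC : ∀ r : 𝕎⟦X⟧, F (LaurentPolynomial.C r) = G (LaurentPolynomial.C r))
    (hT : F (LaurentPolynomial.T 1) = G (LaurentPolynomial.T 1)) : F = G := by
  have h1 : F (LaurentPolynomial.T 1) * F (LaurentPolynomial.T (-1)) = 1 := by
    rw [← map_mul, ← LaurentPolynomial.T_add]
    norm_num
  have h2 : G (LaurentPolynomial.T 1) * G (LaurentPolynomial.T (-1)) = 1 := by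
    rw [← map_mul, ← LaurentPolynomial.T_add]
    norm_num
  have hT' : F (LaurentPolynomial.T (-1)) = G (LaurentPolynomial.T (-1)) := by
    calc F (LaurentPolynomial.T (-1))
        = F (LaurentPolynomial.T (-1)) * (G (LaurentPolynomial.T 1)
            * G (LaurentPolynomial.T (-1))) := by rw [h2, mul_one]
      _ = (F (LaurentPolynomial.T 1) * F (LaurentPolynomial.T (-1)))
            * G (LaurentPolynomial.T (-1)) := by rw [hT]; ring
      _ = G (LaurentPolynomial.T (-1)) := by rw [h1, one_mul]
  refine RingHom.ext fun f => ?_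
  induction f using LaurentPolynomial.induction_on with
  | h_C a => exact hC a
  | h_add hp hq => rw [map_add, map_add, hp, hq]
  | h_C_mul_T n a ih =>
      have e : (LaurentPolynomial.C a * LaurentPolynomial.T ((n : ℤ) + 1) : L)
          = (LaurentPolynomial.C a * LaurentPolynomial.T n) * LaurentPolynomial.T 1 := by
        rw [LaurentPolynomial.T_add]; ring
      rw [e, map_mul, ih, hT, ← map_mul]
  | h_C_mul_T_Z n a ih =>
      have e : (LaurentPolynomial.C a * LaurentPolynomial.T (-(n : ℤ) - 1) : L)
          = (LaurentPolynomial.C a * LaurentPolynomial.T (-(n : ℤ))) * LaurentPolynomial.T (-1) := by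
        rw [LaurentPolynomial.T_sub]; ring
      rw [e, map_mul, ih, hT', ← map_mul]

/-- There is a unique ring homomorphism `Γ : L → L` agreeing with
`γ` on `R ⊆ L` and satisfying `Γ(T) = (1 − X)·T`.  This `Γ` satisfies
`Γ²(T) = −T` and `Γ⁴ = id`; in particular `Γ` is a ring automorphism of `L` of
order exactly 4, giving `L = E_*` the structure of a `C₄`-algebra. -/
theorem statement7
    (φ : 𝕎⟦X⟧ →+* 𝕎⟦X⟧)
    (hφC : ∀ a : 𝕎, φ (PowerSeries.C a) = PowerSeries.C a)
    (hφY : φ PowerSeries.X = μ k - 2)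
    (γ : 𝕎⟦X⟧ →+* 𝕎⟦X⟧)
    (hγC : ∀ a : 𝕎, γ (PowerSeries.C a) = PowerSeries.C a)
    (hγX : γ PowerSeries.X = μ₁ k)
    (hγφ : ∀ f : 𝕎⟦X⟧, γ (φ f) = φ f)
    :
    (∃! Γ : L →+* L,
      (∀ r : 𝕎⟦X⟧, Γ (LaurentPolynomial.C r) = LaurentPolynomial.C (γ r)) ∧
      Γ (LaurentPolynomial.T 1) =
        LaurentPolynomial.C (1 - PowerSeries.X) * LaurentPolynomial.T 1) ∧
    (∀ Γ : L →+* L,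
      (∀ r : 𝕎⟦X⟧, Γ (LaurentPolynomial.C r) = LaurentPolynomial.C (γ r)) →
      Γ (LaurentPolynomial.T 1) =
        LaurentPolynomial.C (1 - PowerSeries.X) * LaurentPolynomial.T 1 →
      Γ (Γ (LaurentPolynomial.T 1)) = -LaurentPolynomial.T 1 ∧
      Γ.comp (Γ.comp (Γ.comp Γ)) = RingHom.id L ∧
      Γ ≠ RingHom.id L ∧
      Γ.comp Γ ≠ RingHom.id L) := by
  classical
  -- basic facts in 𝕎⟦X⟧
  have hu : IsUnit (1 - PowerSeries.X : 𝕎⟦X⟧) := by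
    rw [PowerSeries.isUnit_iff_constantCoeff]
    simp
  have hinv : (1 - PowerSeries.X : 𝕎⟦X⟧) * Ring.inverse (1 - PowerSeries.X) = 1 :=
    Ring.mul_inverse_cancel _ hu
  have hkey : (1 - μ₁ k) * (1 - PowerSeries.X) = -1 := by
    unfold μ₁
    linear_combination (PowerSeries.X - 2 : 𝕎⟦X⟧) * hinv
  have hγμ₁ : γ (μ₁ k) = PowerSeries.X := by
    have hμ : γ (μ k) = μ k := by
      have h2 : μ k = φ (PowerSeries.X + PowerSeries.C 2) := by
        rw [map_add, hφY, hφC]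
        have : (PowerSeries.C 2 : 𝕎⟦X⟧) = 2 := map_ofNat _ 2
        rw [this]; ring
      rw [h2, hγφ]
    have hdef : μ k = PowerSeries.X + μ₁ k := rfl
    have := congrArg γ hdef
    rw [hμ, map_add, hγX] at this
    -- this : μ k = γ X + γ (μ₁ k) with γ X = μ₁
    have : μ k = μ₁ k + γ (μ₁ k) := this
    rw [hdef] at this
    linear_combination -this
  have hγ1X : γ (1 - PowerSeries.X) = 1 - μ₁ k := by
    rw [map_sub, map_one, hγX]
  have hγ2 : ∀ f : 𝕎⟦X⟧, γ (γ f) = f := by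
    intro f
    have := psfix k (γ.comp γ)
      (fun a => by simp [RingHom.comp_apply, hγC])
      (by simp [RingHom.comp_apply, hγX, hγμ₁]) f
    simpa [RingHom.comp_apply] using this
  -- injectivity of C on Laurent polynomials
  have hCinj : ∀ a b : 𝕎⟦X⟧, (LaurentPolynomial.C a : L) = LaurentPolynomial.C b → a = b := by
    intro a b h
    have ha := congrFun (congrArg (fun f : L => (f.coeff : ℤ → 𝕎⟦X⟧)) h) 0
    simpa using ha
  -- the candidate unit
  have huL : IsUnit (LaurentPolynomial.C (1 - PowerSeries.X) * LaurentPolynomial.T 1 : L) :=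
    (hu.map (LaurentPolynomial.C (R := 𝕎⟦X⟧))).mul (LaurentPolynomial.isUnit_T 1)
  set u : Lˣ := huL.unit with hu_def
  have hu_val : (u : L) = LaurentPolynomial.C (1 - PowerSeries.X) * LaurentPolynomial.T 1 :=
    huL.unit_spec
  -- the constructed homomorphism
  set Γ₀ : L →+* L :=
    AddMonoidAlgebra.liftNCRingHom ((LaurentPolynomial.C (R := 𝕎⟦X⟧)).comp γ)
      ((Units.coeHom L).comp (zpowersHom Lˣ u)) (fun _ _ => Commute.all _ _) with hΓ₀def
  have hsingle : ∀ (n : ℤ) (r : 𝕎⟦X⟧),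
      Γ₀ (AddMonoidAlgebra.single n r : L) = LaurentPolynomial.C (γ r) * ((u ^ n : Lˣ) : L) := by
    intro n r
    show AddMonoidAlgebra.liftNC _ _ (AddMonoidAlgebra.single n r) = _
    rw [AddMonoidAlgebra.liftNC_single]
    simp only [RingHom.coe_coe, RingHom.coe_comp, Function.comp_apply, MonoidHom.coe_comp,
      Units.coeHom_apply, zpowersHom_apply, toAdd_ofAdd]
    rfl
  have hΓ₀C : ∀ r : 𝕎⟦X⟧, Γ₀ (LaurentPolynomial.C r) = LaurentPolynomial.C (γ r) := by
    intro r
    have h0 := hsingle 0 r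
    simp only [zpow_zero, Units.val_one, mul_one] at h0
    rw [← LaurentPolynomial.single_eq_C]
    exact h0
  have hΓ₀T : Γ₀ (LaurentPolynomial.T 1) =
      LaurentPolynomial.C (1 - PowerSeries.X) * LaurentPolynomial.T 1 := by
    have h1 := hsingle 1 1
    simp only [map_one, zpow_one, one_mul, hu_val] at h1
    exact h1
  refine ⟨⟨Γ₀, ⟨hΓ₀C, hΓ₀T⟩, ?_⟩, ?_⟩
  · rintro Γ' ⟨h1, h2⟩
    exact lext k Γ' Γ₀ (fun r => by rw [h1, hΓ₀C]) (by rw [h2, hΓ₀T])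
  · intro Γ hC hT
    have hΓ2T : Γ (Γ (LaurentPolynomial.T 1)) = -LaurentPolynomial.T 1 := by
      rw [hT, map_mul, hC, hT, hγ1X, ← mul_assoc, ← map_mul, hkey]
      rw [map_neg, map_one]
      ring
    refine ⟨hΓ2T, ?_, ?_, ?_⟩
    · refine lext k _ _ (fun r => ?_) ?_
      · simp only [RingHom.comp_apply, RingHom.id_apply, hC, hγ2]
      · simp only [RingHom.comp_apply, RingHom.id_apply]
        rw [hΓ2T, map_neg, map_neg, hΓ2T, neg_neg]
    · intro h
      have hTT : Γ (LaurentPolynomial.T 1) = LaurentPolynomial.T 1 := by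
        rw [h]; rfl
      rw [hT] at hTT
      have hcan : LaurentPolynomial.C (1 - PowerSeries.X) = (1 : L) :=
        (LaurentPolynomial.isUnit_T 1).mul_right_cancel (by rw [one_mul]; exact hTT)
      have h1 : (1 - PowerSeries.X : 𝕎⟦X⟧) = 1 := by
        apply hCinj
        rw [hcan, map_one]
      have : (PowerSeries.X : 𝕎⟦X⟧) = 0 := by linear_combination -h1
      exact PowerSeries.X_ne_zero this
    · intro h
      have hTT : Γ (Γ (LaurentPolynomial.T 1)) = LaurentPolynomial.T 1 := by
        have := congrArg (fun F : L →+* L => F (LaurentPolynomial.T 1)) h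
        simpa [RingHom.comp_apply] using this
      rw [hΓ2T] at hTT
      have hcan : (-1 : L) = 1 :=
        (LaurentPolynomial.isUnit_T 1).mul_right_cancel
          (by linear_combination hTT)
      have h2 : (-1 : 𝕎⟦X⟧) = 1 := by
        apply hCinj
        rw [map_one, map_neg, map_one]
        exact hcan
      have h3 : (2 : 𝕎⟦X⟧) = 0 := by linear_combination -h2
      have h4 : (2 : 𝕎) = 0 := by
        have := congrArg (PowerSeries.constantCoeff (R := 𝕎)) h3
        simpa [map_ofNat] using this
      exact WittVector.p_nonzero 2 k (by exact_mod_cast h4)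
end
end

section
/- The fixed subring of Γ², namely {x ∈ L : Γ(Γ(x)) = x}, equals the subring of L generated by R together with T² and T⁻², i.e. the set of Laurent polynomials over R supported in even powers of T. (This is the statement E_*^{C₂} ≅ W⟦μ₀⟧[Σ₂,₀^{±1}].) -/
/- Setup: `k` a perfect field of characteristic 2, `𝕎 = W(k)` the 2-typical Witt
vectors, `R = 𝕎⟦X⟧` the formal power series ring, `μ₁ = (2 - X)(1 - X)⁻¹` and
`μ = X + μ₁` (modelling `π₀E` with `μ₀ = X`). -/

noncomputable section

open scoped PowerSeries

variable (k : Type) [Field k] [CharP k 2] [PerfectField k]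

local notation "𝕎" => WittVector 2 k

/- `L = R[T, T⁻¹]` models `E_* = W⟦μ₀⟧[r₁,₀^{±1}]` with `r₁,₀ = T`. -/
local notation "L" => LaurentPolynomial (𝕎⟦X⟧)

set_option maxHeartbeats 1000000 in
/-- The fixed subring of `Γ²`, namely `{x ∈ L : Γ(Γ(x)) = x}`,
equals the subring of `L` generated by `R` together with `T²` and `T⁻²`, i.e.
the Laurent polynomials over `R` supported in even powers of `T`
(this is `E_*^{C₂} ≅ W⟦μ₀⟧[Σ₂,₀^{±1}]`). -/
theorem statement11
    (φ : 𝕎⟦X⟧ →+* 𝕎⟦X⟧)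
    (hφC : ∀ a : 𝕎, φ (PowerSeries.C a) = PowerSeries.C a)
    (hφY : φ PowerSeries.X = μ k - 2)
    (γ : 𝕎⟦X⟧ →+* 𝕎⟦X⟧)
    (hγC : ∀ a : 𝕎, γ (PowerSeries.C a) = PowerSeries.C a)
    (hγX : γ PowerSeries.X = μ₁ k)
    (hγφ : ∀ f : 𝕎⟦X⟧, γ (φ f) = φ f)
    (Γ : L →+* L)
    (hΓC : ∀ r : 𝕎⟦X⟧, Γ (LaurentPolynomial.C r) = LaurentPolynomial.C (γ r))
    (hΓT : Γ (LaurentPolynomial.T 1) =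
      LaurentPolynomial.C (1 - PowerSeries.X) * LaurentPolynomial.T 1) :
    {x : L | Γ (Γ x) = x} =
      (Subring.closure
        ((Set.range fun r : 𝕎⟦X⟧ => (LaurentPolynomial.C r : L)) ∪
          {LaurentPolynomial.T 2, LaurentPolynomial.T (-2)}) : Set L) := by
  classical
  have hinv : (1 - PowerSeries.X : 𝕎⟦X⟧) * Ring.inverse (1 - PowerSeries.X) = 1 := by
    apply Ring.mul_inverse_cancel
    rw [PowerSeries.isUnit_iff_constantCoeff]
    simp
  have hkey : (1 - μ₁ k) * (1 - PowerSeries.X) = (-1 : 𝕎⟦X⟧) := by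
    have h1 : (2 - PowerSeries.X : 𝕎⟦X⟧) * Ring.inverse (1 - PowerSeries.X)
        * (1 - PowerSeries.X) = 2 - PowerSeries.X := by
      rw [mul_assoc, mul_comm (Ring.inverse _), hinv, mul_one]
    unfold μ₁
    rw [sub_mul, one_mul, h1]
    ring
  have hγμ : γ (μ k) = μ k := by
    have h1 : γ (μ k - 2) = μ k - 2 := by rw [← hφY]; exact hγφ _
    rw [map_sub] at h1
    have h2 : γ (2 : 𝕎⟦X⟧) = 2 := map_ofNat γ 2
    rw [h2] at h1
    linear_combination h1
  have hγμ₁ : γ (μ₁ k) = PowerSeries.X := by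
    have h1 : γ (PowerSeries.X + μ₁ k) = PowerSeries.X + μ₁ k := hγμ
    rw [map_add, hγX] at h1
    linear_combination h1
  -- γ is an involution
  have hγ2 : ∀ f : 𝕎⟦X⟧, γ (γ f) = f := by
    intro f
    refine PowerSeries.ext fun n => ?_
    set p : 𝕎⟦X⟧ := ∑ i ∈ Finset.range (n + 1),
      PowerSeries.C ((PowerSeries.coeff i) f) * PowerSeries.X ^ i with hp
    have hγp : γ (γ p) = p := by
      simp only [hp, map_sum, map_mul, map_pow, hγC, hγX, hγμ₁]
    have hdvd : (PowerSeries.X : 𝕎⟦X⟧) ^ (n + 1) ∣ f - p := by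
      rw [PowerSeries.X_pow_dvd_iff]
      intro m hm
      have hmem : m ∈ Finset.range (n + 1) := Finset.mem_range.mpr hm
      rw [map_sub, hp, map_sum]
      simp [PowerSeries.coeff_X_pow, Finset.sum_ite_eq' _ m, hmem]
    obtain ⟨d, hd⟩ := hdvd
    have h3 : (PowerSeries.X : 𝕎⟦X⟧) ^ (n + 1) ∣ γ (γ f) - f := by
      have h4 : γ (γ f) - f = γ (γ (f - p)) - (f - p) := by
        rw [map_sub, map_sub, hγp]; ring
      have h5 : γ (γ (f - p)) = PowerSeries.X ^ (n + 1) * γ (γ d) := by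
        rw [hd, map_mul, map_mul, map_pow, map_pow, hγX, hγμ₁]
      rw [h4, h5, hd]
      exact dvd_sub (Dvd.intro _ rfl) (Dvd.intro _ rfl)
    have h6 := PowerSeries.X_pow_dvd_iff.mp h3 n (by omega)
    rw [map_sub] at h6
    exact sub_eq_zero.mp h6
  -- basic facts about Γ²
  have hG2C : ∀ r : 𝕎⟦X⟧, Γ (Γ (LaurentPolynomial.C r)) = LaurentPolynomial.C r := by
    intro r; rw [hΓC, hΓC, hγ2]
  have hγ1X : γ (1 - PowerSeries.X) = 1 - μ₁ k := by rw [map_sub, map_one, hγX]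
  have hCneg : ((-1 : L)) = LaurentPolynomial.C (-1 : 𝕎⟦X⟧) := by
    rw [map_neg, map_one]
  have hG2T1 : Γ (Γ (LaurentPolynomial.T 1)) = -LaurentPolynomial.T 1 := by
    rw [hΓT, map_mul, hΓC, hΓT, hγ1X, ← mul_assoc, ← map_mul, hkey, map_neg, map_one]
    ring
  have hnegpow : ∀ (a : L) (m : ℕ), (-a) ^ m = (-1 : L) ^ m * a ^ m := by
    intro a m
    induction m with
    | zero => simp
    | succ i ih => rw [pow_succ, pow_succ, pow_succ, ih]; ring
  have hpos : ∀ m : ℕ, Γ (Γ (LaurentPolynomial.T (m : ℤ))) =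
      (-1 : L) ^ m * LaurentPolynomial.T (m : ℤ) := by
    intro m
    have hT : (LaurentPolynomial.T (m : ℤ) : L) = LaurentPolynomial.T 1 ^ m := by
      rw [LaurentPolynomial.T_pow, mul_one]
    rw [hT, map_pow, map_pow, hG2T1]
    exact hnegpow _ m
  have hneg : ∀ m : ℕ, Γ (Γ (LaurentPolynomial.T (-(m : ℤ)))) =
      (-1 : L) ^ m * LaurentPolynomial.T (-(m : ℤ)) := by
    intro m
    have h1 : Γ (Γ (LaurentPolynomial.T (-(m : ℤ)))) *
        ((-1 : L) ^ m * LaurentPolynomial.T (m : ℤ)) = 1 := by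
      rw [← hpos m, ← map_mul, ← map_mul, ← LaurentPolynomial.T_add, neg_add_cancel,
        LaurentPolynomial.T_zero, map_one, map_one]
    have h2 : ((-1 : L) ^ m * LaurentPolynomial.T (m : ℤ)) *
        ((-1 : L) ^ m * LaurentPolynomial.T (-(m : ℤ))) = 1 := by
      rw [mul_mul_mul_comm, ← LaurentPolynomial.T_add, add_neg_cancel,
        LaurentPolynomial.T_zero, mul_one, ← pow_add]
      exact Even.neg_one_pow (α := L) ⟨m, rfl⟩
    calc Γ (Γ (LaurentPolynomial.T (-(m : ℤ))))
        = Γ (Γ (LaurentPolynomial.T (-(m : ℤ)))) *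
            (((-1 : L) ^ m * LaurentPolynomial.T (m : ℤ)) *
              ((-1 : L) ^ m * LaurentPolynomial.T (-(m : ℤ)))) := by rw [h2, mul_one]
      _ = (-1 : L) ^ m * LaurentPolynomial.T (-(m : ℤ)) := by rw [← mul_assoc, h1, one_mul]
  have hG2T : ∀ n : ℤ, Γ (Γ (LaurentPolynomial.T n)) =
      (-1 : L) ^ n.natAbs * LaurentPolynomial.T n := by
    intro n
    obtain ⟨m, hm | hm⟩ : ∃ m : ℕ, n = (m : ℤ) ∨ n = -(m : ℤ) := ⟨n.natAbs, n.natAbs_eq⟩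
    · subst hm
      simpa using hpos m
    · subst hm
      simpa using hneg m
  have hG2single : ∀ (n : ℤ) (a : 𝕎⟦X⟧),
      Γ (Γ (AddMonoidAlgebra.single n a : L)) =
        (AddMonoidAlgebra.single n ((-1 : 𝕎⟦X⟧) ^ n.natAbs * a) : L) := by
    intro n a
    rw [LaurentPolynomial.single_eq_C_mul_T, LaurentPolynomial.single_eq_C_mul_T,
      map_mul, map_mul, hG2C, hG2T, hCneg, ← map_pow, map_mul]
    ring
  -- 2 is a nonzerodivisor
  have h2W : ((2 : ℕ) : 𝕎) ≠ 0 := (WittVector.irreducible 2).ne_zero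
  have h2R : (2 : 𝕎⟦X⟧) ≠ 0 := by
    intro h
    apply h2W
    have := congrArg (PowerSeries.constantCoeff) h
    rw [map_ofNat] at this
    simpa using this
  ext x
  simp only [Set.mem_setOf_eq, SetLike.mem_coe]
  constructor
  · intro hx
    have hodd : ∀ n ∈ x.coeff.support, Even n := by
      intro n hn
      by_contra hne
      have hco : (Γ (Γ x)).coeff n = (-1 : 𝕎⟦X⟧) ^ n.natAbs * x.coeff n := by
        conv_lhs => rw [← AddMonoidAlgebra.sum_coeff_single x, map_finsuppSum, map_finsuppSum]
        simp only [hG2single]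
        rw [AddMonoidAlgebra.coeff_finsuppSum, Finsupp.sum_apply]
        simp only [AddMonoidAlgebra.coeff_single, Finsupp.single_apply]
        rw [Finsupp.sum_ite_eq' x.coeff n]
        simp [hn]
      rw [hx] at hco
      have hne' : ¬ Even n.natAbs := by rwa [Int.natAbs_even]
      rw [Odd.neg_one_pow (α := 𝕎⟦X⟧) (Nat.not_even_iff_odd.mp hne')] at hco
      have h2 : (2 : 𝕎⟦X⟧) * x.coeff n = 0 := by linear_combination hco
      rcases mul_eq_zero.mp h2 with h | h
      · exact h2R h
      · exact (Finsupp.mem_support_iff.mp hn) h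
    rw [← AddMonoidAlgebra.sum_coeff_single x]
    refine Subring.sum_mem _ fun n hn => ?_
    rw [LaurentPolynomial.single_eq_C_mul_T]
    refine mul_mem (Subring.subset_closure (Set.mem_union_left _ ⟨x.coeff n, rfl⟩)) ?_
    obtain ⟨m, hm⟩ := hodd n hn
    rcases le_or_gt 0 m with h | h
    · have hT : (LaurentPolynomial.T n : L) = LaurentPolynomial.T 2 ^ m.toNat := by
        rw [LaurentPolynomial.T_pow]
        congr 1
        have := Int.toNat_of_nonneg h
        omega
      rw [hT]
      exact pow_mem (Subring.subset_closure
        (Set.mem_union_right _ (Set.mem_insert _ _))) _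
    · have hT : (LaurentPolynomial.T n : L) = LaurentPolynomial.T (-2) ^ (-m).toNat := by
        rw [LaurentPolynomial.T_pow]
        congr 1
        have := Int.toNat_of_nonneg (by omega : (0:ℤ) ≤ -m)
        omega
      rw [hT]
      refine pow_mem (Subring.subset_closure (Set.mem_union_right _ ?_)) _
      simp
  · intro hx
    refine Subring.closure_induction ?_ ?_ ?_ ?_ ?_ ?_ hx
    · rintro y (⟨r, rfl⟩ | hy)
      · exact hG2C r
      · rcases hy with rfl | rfl
        · rw [hG2T 2]; norm_num
        · rw [hG2T (-2)]; norm_num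
    · simp
    · simp
    · intro a b _ _ ha hb; rw [map_add, map_add, ha, hb]
    · intro a _ ha; rw [map_neg, map_neg, ha]
    · intro a b _ _ ha hb; rw [map_mul, map_mul, ha, hb]
end
end

section
/- In L the identity Δ₁ = T·Γ(T)·Γ²(T)·Γ³(T) holds; that is, Δ₁ is the norm element r₁,₀·γ(r₁,₀)·γ²(r₁,₀)·γ³(r₁,₀) of the C₄-action on E_*. -/
/- Setup: `k` a perfect field of characteristic 2, `𝕎 = W(k)` the 2-typical Witt
vectors, `R = 𝕎⟦X⟧` the formal power series ring, `μ₁ = (2 - X)(1 - X)⁻¹` and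
`μ = X + μ₁` (modelling `π₀E` with `μ₀ = X`). -/

noncomputable section

open scoped PowerSeries

variable (k : Type) [Field k] [CharP k 2] [PerfectField k]

local notation "𝕎" => WittVector 2 k

/- `L = R[T, T⁻¹]` models `E_* = W⟦μ₀⟧[r₁,₀^{±1}]` with `r₁,₀ = T`. -/
local notation "L" => LaurentPolynomial (𝕎⟦X⟧)

/-- In `L` the identity `Δ₁ = T·Γ(T)·Γ²(T)·Γ³(T)` holds; that is,
`Δ₁` is the norm element `r₁,₀·γ(r₁,₀)·γ²(r₁,₀)·γ³(r₁,₀)` of the `C₄`-action on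
`E_*`. -/
theorem statement12
    (φ : 𝕎⟦X⟧ →+* 𝕎⟦X⟧)
    (hφC : ∀ a : 𝕎, φ (PowerSeries.C (R := 𝕎) a) = PowerSeries.C (R := 𝕎) a)
    (hφY : φ PowerSeries.X = μ k - 2)
    (γ : 𝕎⟦X⟧ →+* 𝕎⟦X⟧)
    (hγC : ∀ a : 𝕎, γ (PowerSeries.C (R := 𝕎) a) = PowerSeries.C (R := 𝕎) a)
    (hγX : γ PowerSeries.X = μ₁ k)
    (hγφ : ∀ f : 𝕎⟦X⟧, γ (φ f) = φ f)
    (Γ : L →+* L)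
    (hΓC : ∀ r : 𝕎⟦X⟧, Γ (LaurentPolynomial.C r) = LaurentPolynomial.C (γ r))
    (hΓT : Γ (LaurentPolynomial.T 1) =
      LaurentPolynomial.C (1 - PowerSeries.X) * LaurentPolynomial.T 1) :
    Δ₁ k = LaurentPolynomial.T 1 * Γ (LaurentPolynomial.T 1) *
      Γ (Γ (LaurentPolynomial.T 1)) * Γ (Γ (Γ (LaurentPolynomial.T 1))) := by
  have hu : IsUnit ((1 : 𝕎⟦X⟧) - PowerSeries.X) := by
    rw [PowerSeries.isUnit_iff_constantCoeff]; simp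
  have hμ : ((1 : 𝕎⟦X⟧) - PowerSeries.X) * μ₁ k = 2 - PowerSeries.X := by
    rw [μ₁, mul_comm, mul_assoc, Ring.inverse_mul_cancel _ hu, mul_one]
  have key : ((1 : 𝕎⟦X⟧) - PowerSeries.X) * (1 - μ₁ k) = -1 := by
    rw [mul_sub, mul_one, hμ]; ring
  have hγ1X : γ (1 - PowerSeries.X) = 1 - μ₁ k := by
    rw [map_sub, map_one, hγX]
  have hΓ2 : Γ (Γ (LaurentPolynomial.T 1)) = -LaurentPolynomial.T 1 := by
    rw [hΓT, map_mul, hΓC, hγ1X, hΓT, ← mul_assoc, ← map_mul, mul_comm (1 - μ₁ k), key]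
    simp only [map_neg, map_one]
    ring
  have hΓ3 : Γ (Γ (Γ (LaurentPolynomial.T 1))) =
      -(LaurentPolynomial.C (1 - PowerSeries.X) * LaurentPolynomial.T 1) := by
    rw [hΓ2, map_neg, hΓT]
  rw [hΓ3, hΓ2, hΓT, Δ₁, δ₁, r₁₁]
  ring
end
end
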